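/- arXiv:1707.00617 — 3 statements merged into one kernel-verified Lean document; each statement's English description precedes it below -/
import Mathlib

section
/- Let E = {1,...,N} × {1,...,C} with nonnegative unary weights w_i^c and nonnegative symmetric pairwise weights w_{ij}^c. Define h(A) = -(Σ_{(i,c)∈A} w_i^c + Σ_c Σ_{i<j with (i,c),(j,c)∈A} w_{ij}^c), p_i = max_{c} (w_i^c + Σ_{j≠i} w_{ij}^c), and h_1(A) = -Σ_{i=1}^N p_i (C - |A ∩ ({i}×{1,...,C})|). Then the function A ↦ h(A) + h_1(A) is monotonically non-decreasing: for all B ⊆ A ⊆ E, h(B) + h_1(B) ≤ h(A) + h_1(A). -/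
theorem stmt_5 (N C : ℕ) [NeZero C]
    (w : Fin N → Fin C → ℝ) (W : Fin N → Fin N → Fin C → ℝ)
    (hw : ∀ i c, 0 ≤ w i c) (hW : ∀ i j c, 0 ≤ W i j c)
    (hsym : ∀ i j c, W i j c = W j i c)
    (h h₁ : Finset (Fin N × Fin C) → ℝ) (p : Fin N → ℝ)
    (hh : ∀ A : Finset (Fin N × Fin C),
      h A = -((∑ a ∈ A, w a.1 a.2) +
        ∑ a ∈ A, ∑ b ∈ A, if a.1 < b.1 ∧ a.2 = b.2 then W a.1 b.1 a.2 else 0))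
    (hp : ∀ i, p i = Finset.univ.sup' Finset.univ_nonempty
      (fun c => w i c + ∑ j ∈ Finset.univ.filter (fun j => j ≠ i), W i j c))
    (hh₁ : ∀ A : Finset (Fin N × Fin C),
      h₁ A = -∑ i, p i * ((C : ℝ) -
        ((A ∩ Finset.univ.filter (fun a : Fin N × Fin C => a.1 = i)).card : ℝ))) :
    ∀ A B : Finset (Fin N × Fin C), B ⊆ A → h B + h₁ B ≤ h A + h₁ A := by
  -- single insertion step
  have key : ∀ (S : Finset (Fin N × Fin C)) (x : Fin N × Fin C), x ∉ S →
      h S + h₁ S ≤ h (insert x S) + h₁ (insert x S) := by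
    intro S x hxS
    set f : Fin N × Fin C → Fin N × Fin C → ℝ :=
      fun a b => if a.1 < b.1 ∧ a.2 = b.2 then W a.1 b.1 a.2 else 0 with hf
    have hfxx : f x x = 0 := by simp [hf]
    -- h computation
    have hH : h (insert x S) = h S -
        (w x.1 x.2 + (∑ b ∈ S, f x b + ∑ a ∈ S, f a x)) := by
      rw [hh, hh]
      rw [Finset.sum_insert hxS, Finset.sum_insert hxS]
      have : ∀ a ∈ S, (∑ b ∈ insert x S, f a b) = f a x + ∑ b ∈ S, f a b := by
        intro a _
        rw [Finset.sum_insert hxS]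
      rw [Finset.sum_congr rfl this, Finset.sum_insert hxS, Finset.sum_add_distrib]
      simp only [hf, lt_irrefl, false_and, if_false]
      ring
    -- h₁ computation
    have hcard : ∀ i : Fin N,
        (((insert x S) ∩ Finset.univ.filter (fun a : Fin N × Fin C => a.1 = i)).card : ℝ)
        = ((S ∩ Finset.univ.filter (fun a : Fin N × Fin C => a.1 = i)).card : ℝ)
          + if i = x.1 then 1 else 0 := by
      intro i
      by_cases hi : i = x.1
      · rw [Finset.insert_inter_of_mem (by simp [hi])]
        rw [Finset.card_insert_of_notMem (fun hc => hxS (Finset.mem_inter.mp hc).1)]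
        simp [hi]
      · rw [Finset.insert_inter_of_notMem (by simp [Ne.symm hi])]
        simp [hi]
    have hH₁ : h₁ (insert x S) = h₁ S + p x.1 := by
      rw [hh₁, hh₁]
      have : ∀ i : Fin N, p i * ((C : ℝ) -
            (((insert x S) ∩ Finset.univ.filter (fun a : Fin N × Fin C => a.1 = i)).card : ℝ))
          = p i * ((C : ℝ) -
            ((S ∩ Finset.univ.filter (fun a : Fin N × Fin C => a.1 = i)).card : ℝ))
            - (if i = x.1 then p i else 0) := by
        intro i
        rw [hcard i]
        by_cases hi : i = x.1 <;> simp [hi] <;> ring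
      rw [Finset.sum_congr rfl (fun i _ => this i), Finset.sum_sub_distrib,
        Finset.sum_ite_eq' Finset.univ x.1 p]
      simp only [Finset.mem_univ, if_true]
      ring
    rw [hH, hH₁]
    -- reduce to the weight bound
    have hbound : w x.1 x.2 + (∑ b ∈ S, f x b + ∑ a ∈ S, f a x) ≤ p x.1 := by
      have hple : w x.1 x.2 + ∑ j ∈ Finset.univ.filter (fun j => j ≠ x.1), W x.1 j x.2
          ≤ p x.1 := by
        rw [hp]
        exact Finset.le_sup'
          (fun c => w x.1 c + ∑ j ∈ Finset.univ.filter (fun j => j ≠ x.1), W x.1 j c)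
          (Finset.mem_univ x.2)
      have hpt : ∀ a : Fin N × Fin C, f x a + f a x ≤
          (if a.2 = x.2 ∧ a.1 ≠ x.1 then W x.1 a.1 x.2 else 0) := by
        intro a
        simp only [hf]
        by_cases hc : a.2 = x.2
        · by_cases hi : a.1 = x.1
          · simp [hi, lt_irrefl]
          · rcases lt_or_gt_of_ne hi with hlt | hgt
            · rw [if_neg (fun hcon => absurd hcon.1 (asymm hlt)), if_pos ⟨hlt, hc⟩,
                if_pos ⟨hc, hi⟩, hc, hsym a.1 x.1]
              linarith
            · rw [if_pos ⟨hgt, hc.symm⟩, if_neg (fun hcon => absurd hcon.1 (asymm hgt)),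
                if_pos ⟨hc, hi⟩]
              linarith
        · rw [if_neg (fun hcon => hc hcon.2.symm), if_neg (fun hcon => hc hcon.2),
            if_neg (fun hcon => hc hcon.1)]
          linarith
      have hsum : (∑ b ∈ S, f x b + ∑ a ∈ S, f a x)
          ≤ ∑ j ∈ Finset.univ.filter (fun j => j ≠ x.1), W x.1 j x.2 := by
        rw [← Finset.sum_add_distrib]
        calc (∑ a ∈ S, (f x a + f a x))
            ≤ ∑ a ∈ S, (if a.2 = x.2 ∧ a.1 ≠ x.1 then W x.1 a.1 x.2 else 0) :=
              Finset.sum_le_sum (fun a _ => hpt a)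
          _ ≤ ∑ a : Fin N × Fin C, (if a.2 = x.2 ∧ a.1 ≠ x.1 then W x.1 a.1 x.2 else 0) :=
              Finset.sum_le_sum_of_subset_of_nonneg (Finset.subset_univ S)
                (fun a _ _ => by split_ifs with hcond; exacts [hW _ _ _, le_rfl])
          _ = ∑ j ∈ Finset.univ.filter (fun j => j ≠ x.1), W x.1 j x.2 := by
              rw [Fintype.sum_prod_type, Finset.sum_filter]
              refine Finset.sum_congr rfl (fun j _ => ?_)
              by_cases hj : j ≠ x.1 <;> simp [hj]
      linarith
    linarith
  intro A B hBA
  have main : ∀ n (A : Finset (Fin N × Fin C)), (A \ B).card = n → B ⊆ A →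
      h B + h₁ B ≤ h A + h₁ A := by
    intro n
    induction n with
    | zero =>
      intro A hA hBA
      have hAB : A = B := Finset.Subset.antisymm
        (Finset.sdiff_eq_empty_iff_subset.mp (Finset.card_eq_zero.mp hA)) hBA
      rw [hAB]
    | succ n ih =>
      intro A hA hBA
      obtain ⟨x, hx⟩ : (A \ B).Nonempty := by
        rw [← Finset.card_pos, hA]; omega
      have hxA : x ∈ A := (Finset.mem_sdiff.mp hx).1
      have hxB : x ∉ B := (Finset.mem_sdiff.mp hx).2
      have hB' : B ⊆ A.erase x := Finset.subset_erase.mpr ⟨hBA, hxB⟩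
      have hcard : (A.erase x \ B).card = n := by
        have : A.erase x \ B = (A \ B).erase x := by
          ext a
          simp only [Finset.mem_sdiff, Finset.mem_erase]
          tauto
        rw [this, Finset.card_erase_of_mem hx, hA]
        omega
      have h1 := ih (A.erase x) hcard hB'
      have h2 := key (A.erase x) x (Finset.notMem_erase x A)
      rw [Finset.insert_erase hxA] at h2
      linarith
  exact main _ A rfl hBA
end

section
/- With the notation of the previous context (nonnegative weights, h, h_1, p_i as defined), for any set B ⊆ E and any element (i,c) ∉ B, the marginal gain satisfies h(B ∪ {(i,c)}) + h_1(B ∪ {(i,c)}) - h(B) - h_1(B) = p_i - w_i^c - Σ_{j : (j,c) ∈ B} w_{ij}^c ≥ 0. -/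
theorem stmt_6 (N C : ℕ) [NeZero C]
    (w : Fin N → Fin C → ℝ) (W : Fin N → Fin N → Fin C → ℝ)
    (hw : ∀ i c, 0 ≤ w i c) (hW : ∀ i j c, 0 ≤ W i j c)
    (hsym : ∀ i j c, W i j c = W j i c)
    (h h₁ : Finset (Fin N × Fin C) → ℝ) (p : Fin N → ℝ)
    (hh : ∀ A : Finset (Fin N × Fin C),
      h A = -((∑ a ∈ A, w a.1 a.2) +
        ∑ a ∈ A, ∑ b ∈ A, if a.1 < b.1 ∧ a.2 = b.2 then W a.1 b.1 a.2 else 0))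
    (hp : ∀ i, p i = Finset.univ.sup' Finset.univ_nonempty
      (fun c => w i c + ∑ j ∈ Finset.univ.filter (fun j => j ≠ i), W i j c))
    (hh₁ : ∀ A : Finset (Fin N × Fin C),
      h₁ A = -∑ i, p i * ((C : ℝ) -
        ((A ∩ Finset.univ.filter (fun a : Fin N × Fin C => a.1 = i)).card : ℝ))) :
    ∀ B : Finset (Fin N × Fin C),
      (∀ i, (B ∩ Finset.univ.filter (fun a : Fin N × Fin C => a.1 = i)).card ≤ 1) →
      ∀ i c, (i, c) ∉ B →
        (h (insert (i, c) B) + h₁ (insert (i, c) B) - h B - h₁ B =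
          p i - w i c - ∑ j ∈ Finset.univ.filter (fun j => (j, c) ∈ B), W i j c) ∧
        0 ≤ h (insert (i, c) B) + h₁ (insert (i, c) B) - h B - h₁ B := by
  intro B _hB i c hic
  have hji : ∀ j : Fin N, (j, c) ∈ B → j ≠ i := by
    intro j hj hji; exact hic (hji ▸ hj)
  -- h difference
  have hdh : h (insert (i, c) B) - h B
      = -(w i c + ∑ j ∈ Finset.univ.filter (fun j => (j, c) ∈ B), W i j c) := by
    rw [hh, hh]
    have h1 : ∑ a ∈ insert (i, c) B, w a.1 a.2 = w i c + ∑ a ∈ B, w a.1 a.2 :=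
      Finset.sum_insert hic
    have h3 : ∀ a ∈ B, (∑ b ∈ insert (i, c) B,
        if a.1 < b.1 ∧ a.2 = b.2 then W a.1 b.1 a.2 else 0)
        = (if a.1 < i ∧ a.2 = c then W a.1 i a.2 else 0)
          + ∑ b ∈ B, (if a.1 < b.1 ∧ a.2 = b.2 then W a.1 b.1 a.2 else 0) :=
      fun a _ => Finset.sum_insert hic
    have h2 : ∑ a ∈ insert (i, c) B, ∑ b ∈ insert (i, c) B,
        (if a.1 < b.1 ∧ a.2 = b.2 then W a.1 b.1 a.2 else 0)
        = (∑ a ∈ B, ∑ b ∈ B, if a.1 < b.1 ∧ a.2 = b.2 then W a.1 b.1 a.2 else 0)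
          + ∑ j ∈ Finset.univ.filter (fun j => (j, c) ∈ B), W i j c := by
      rw [Finset.sum_insert hic, Finset.sum_insert hic,
        Finset.sum_congr rfl h3, Finset.sum_add_distrib]
      have hself : (if (i : Fin N) < i ∧ c = c then W i i c else 0) = 0 := by simp
      have hpt : ∀ b ∈ B,
          (if i < b.1 ∧ c = b.2 then W i b.1 c else 0)
            + (if b.1 < i ∧ b.2 = c then W b.1 i b.2 else 0)
          = if b.2 = c then W i b.1 c else 0 := by
        intro b hb
        by_cases hbc : b.2 = c
        · have hb2 : (b.1, c) ∈ B := by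
            have heq : b = (b.1, c) := by rw [← hbc]
            exact heq ▸ hb
          have hne : b.1 ≠ i := hji b.1 hb2
          rcases lt_or_gt_of_ne hne with hlt | hgt
          · simp [hbc, hlt, not_lt.2 hlt.le, hsym b.1 i c]
          · simp [hbc, hgt, not_lt.2 hgt.le]
        · have h1 : ¬(i < b.1 ∧ c = b.2) := fun hx => hbc hx.2.symm
          have h2 : ¬(b.1 < i ∧ b.2 = c) := fun hx => hbc hx.2
          simp [h1, h2, hbc]
      have hkey : (∑ b ∈ B, if i < b.1 ∧ c = b.2 then W i b.1 c else 0)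
          + (∑ a ∈ B, if a.1 < i ∧ a.2 = c then W a.1 i a.2 else 0)
          = ∑ j ∈ Finset.univ.filter (fun j => (j, c) ∈ B), W i j c := by
        rw [← Finset.sum_add_distrib, Finset.sum_congr rfl hpt]
        rw [← Finset.sum_filter]
        apply Finset.sum_nbij' (fun b => b.1) (fun j => (j, c))
        · intro b hb
          simp only [Finset.mem_filter, Finset.mem_univ, true_and]
          rcases Finset.mem_filter.1 hb with ⟨hb1, hb2⟩
          exact (show b = (b.1, c) by rw [← hb2]) ▸ hb1
        · intro j hj
          exact Finset.mem_filter.2 ⟨(Finset.mem_filter.1 hj).2, rfl⟩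
        · intro b hb
          rcases Finset.mem_filter.1 hb with ⟨_, hb2⟩
          exact (show b = (b.1, c) by rw [← hb2]).symm
        · intro j _; rfl
        · intro j _; rfl
      rw [hself, zero_add]
      ring_nf
      linarith [hkey]
    rw [h1, h2]; ring
  -- h₁ difference
  have hcard : ∀ i' : Fin N,
      (((insert (i, c) B ∩ Finset.univ.filter
          (fun a : Fin N × Fin C => a.1 = i')).card : ℝ))
      = ((B ∩ Finset.univ.filter (fun a : Fin N × Fin C => a.1 = i')).card : ℝ)
        + (if i' = i then 1 else 0) := by
    intro i'
    by_cases hi' : i' = i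
    · subst hi'
      rw [Finset.insert_inter_of_mem (by simp)]
      rw [Finset.card_insert_of_notMem (by simp [hic])]
      push_cast; simp
    · rw [Finset.insert_inter_of_notMem
        (by simp only [Finset.mem_filter]; exact fun hmem => hi' hmem.2.symm)]
      simp [hi']
  have hdh1 : h₁ (insert (i, c) B) - h₁ B = p i := by
    rw [hh₁, hh₁]
    have hcong : ∀ i' ∈ (Finset.univ : Finset (Fin N)),
        p i' * ((C : ℝ) - ((insert (i, c) B ∩ Finset.univ.filter
            (fun a : Fin N × Fin C => a.1 = i')).card : ℝ))
        = p i' * ((C : ℝ) - ((B ∩ Finset.univ.filter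
            (fun a : Fin N × Fin C => a.1 = i')).card : ℝ))
          - (if i' = i then p i' else 0) := by
      intro i' _
      rw [hcard i']
      by_cases hi' : i' = i <;> simp [hi'] <;> ring
    rw [Finset.sum_congr rfl hcong, Finset.sum_sub_distrib,
      Finset.sum_ite_eq' Finset.univ i p]
    simp
  -- nonnegativity of the marginal
  have hsub : Finset.univ.filter (fun j => (j, c) ∈ B)
      ⊆ Finset.univ.filter (fun j => j ≠ i) := by
    intro j hj
    simp only [Finset.mem_filter, Finset.mem_univ, true_and] at *
    exact hji j hj
  have hple : w i c + ∑ j ∈ Finset.univ.filter (fun j => (j, c) ∈ B), W i j c ≤ p i := by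
    rw [hp]
    refine le_trans ?_ (Finset.le_sup' _ (Finset.mem_univ c))
    have := Finset.sum_le_sum_of_subset_of_nonneg hsub
      (fun j _ _ => hW i j c)
    linarith
  constructor
  · linarith
  · linarith
end

section
/- Let E be a finite set, F : 2^E → ℝ a monotonically non-decreasing submodular set function with F(∅) = 0, and M = (E, I) a matroid on E. Let S be the output of the greedy algorithm that starts from ∅ and repeatedly adds an element maximizing the marginal gain while maintaining independence, stopping when no independent augmentation exists. Then F(S) ≥ (1/2) · max{F(A) : A ∈ I}. -/
open Finset

lemma sum_rho_le {β : Type*} [DecidableEq β] (ρ : ℕ → ℝ)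
    (hanti : ∀ i j : ℕ, i ≤ j → ρ j ≤ ρ i)
    (T : Finset β) (t : β → ℕ)
    (hcount : ∀ i, (T.filter (fun a => t a < i)).card ≤ i) :
    ∑ a ∈ T, ρ (t a) ≤ ∑ i ∈ Finset.range T.card, ρ i := by
  obtain ⟨n, hn⟩ : ∃ n, T.card = n := ⟨_, rfl⟩
  induction n generalizing T with
  | zero =>
    have : T = ∅ := Finset.card_eq_zero.mp hn
    simp [this]
  | succ n ih =>
    have hne : T.Nonempty := Finset.card_pos.mp (by omega)
    obtain ⟨a₀, ha₀, hmax⟩ := T.exists_max_image t hne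
    have hcard' : (T.erase a₀).card = n := by
      rw [Finset.card_erase_of_mem ha₀, hn]; omega
    have hcount' : ∀ i, ((T.erase a₀).filter (fun a => t a < i)).card ≤ i := by
      intro i
      exact le_trans (Finset.card_le_card
        (Finset.filter_subset_filter _ (Finset.erase_subset _ _))) (hcount i)
    have ihx := ih (T.erase a₀) hcount' hcard'
    have hsum : ∑ a ∈ T, ρ (t a) = ∑ a ∈ T.erase a₀, ρ (t a) + ρ (t a₀) :=
      (Finset.sum_erase_add T _ ha₀).symm
    have hTfull : T.filter (fun a => t a < t a₀ + 1) = T := by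
      apply Finset.filter_true_of_mem
      intro a ha
      exact Nat.lt_succ_of_le (hmax a ha)
    have hn_le : n ≤ t a₀ := by
      have := hcount (t a₀ + 1)
      rw [hTfull, hn] at this
      omega
    have hρ : ρ (t a₀) ≤ ρ n := hanti n _ hn_le
    rw [hcard'] at ihx
    rw [hsum, hn, Finset.sum_range_succ]
    linarith

lemma tel {α : Type*} [DecidableEq α] (F : Finset α → ℝ)
    (hsub : ∀ A B : Finset α, B ⊆ A → ∀ e, e ∉ A →
      F (insert e A) - F A ≤ F (insert e B) - F B)
    (S : Finset α) :
    ∀ B : Finset α, Disjoint S B →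
      F (S ∪ B) - F S ≤ ∑ a ∈ B, (F (insert a S) - F S) := by
  intro B
  induction B using Finset.induction_on with
  | empty => simp
  | @insert a B ha ih =>
    intro hd
    have hd' : Disjoint S B := hd.mono_right (Finset.subset_insert a B)
    have haS : a ∉ S := fun h => (Finset.disjoint_left.mp hd) h (Finset.mem_insert_self a B)
    have haSB : a ∉ S ∪ B := by simp [haS, ha]
    have h1 : F (insert a (S ∪ B)) - F (S ∪ B) ≤ F (insert a S) - F S :=
      hsub (S ∪ B) S Finset.subset_union_left a haSB
    have h2 := ih hd'
    have hu : S ∪ insert a B = insert a (S ∪ B) := by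
      ext x; simp [or_comm, or_assoc, or_left_comm]
    rw [hu, Finset.sum_insert ha]
    linarith

theorem stmt_7 {α : Type*} [DecidableEq α] [Fintype α]
    (F : Finset α → ℝ) (Ind : Finset α → Prop)
    (hF0 : F ∅ = 0)
    (hmono : ∀ A B : Finset α, B ⊆ A → F B ≤ F A)
    (hsub : ∀ A B : Finset α, B ⊆ A → ∀ e, e ∉ A →
      F (insert e A) - F A ≤ F (insert e B) - F B)
    (hIempty : Ind ∅)
    (hIdown : ∀ A B : Finset α, Ind A → B ⊆ A → Ind B)
    (hIexch : ∀ A B : Finset α, Ind A → Ind B → A.card < B.card →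
      ∃ e ∈ B \ A, Ind (insert e A))
    (L : List α) (hnodup : L.Nodup)
    (S : Finset α) (hS : S = L.toFinset)
    -- each greedy step is independent and maximizes the marginal gain
    (hstep : ∀ k : Fin L.length,
      Ind (insert (L.get k) (L.take k).toFinset) ∧
      ∀ e, e ∉ (L.take (k : ℕ)).toFinset → Ind (insert e (L.take (k : ℕ)).toFinset) →
        F (insert e (L.take (k : ℕ)).toFinset) ≤
          F (insert (L.get k) (L.take (k : ℕ)).toFinset))
    -- greedy stops when no independent augmentation exists
    (hstop : ∀ e, e ∉ S → ¬ Ind (insert e S)) :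
    ∀ A : Finset α, Ind A → (1 / 2 : ℝ) * F A ≤ F S := by
  classical
  subst hS
  intro A hA
  set k := L.length with hk
  set P : ℕ → Finset α := fun i => (L.take i).toFinset with hP
  -- basic facts about prefixes
  have hPmono : ∀ i j : ℕ, i ≤ j → P i ⊆ P j := by
    intro i j hij x hx
    simp only [hP, List.mem_toFinset] at hx ⊢
    have : L.take i = (L.take j).take i := by
      rw [List.take_take, min_eq_left hij]
    rw [this] at hx
    exact List.mem_of_mem_take hx
  have hPtop : ∀ i : ℕ, k ≤ i → P i = L.toFinset := by
    intro i hi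
    simp only [hP]
    rw [List.take_of_length_le hi]
  have hPcard : ∀ i : ℕ, (P i).card ≤ i := by
    intro i
    calc (P i).card ≤ (L.take i).length := List.toFinset_card_le _
    _ ≤ i := by simp [List.length_take]
  have hPsucc : ∀ i (hi : i < k), P (i + 1) = insert (L.get ⟨i, hi⟩) (P i) := by
    intro i hi
    simp only [hP]
    rw [← List.take_concat_get hi]
    ext x
    simp only [List.mem_toFinset, List.concat_eq_append, List.mem_append,
      List.mem_singleton, Finset.mem_insert, List.get_eq_getElem]
    tauto
  have hgetnm : ∀ i (hi : i < k), L.get ⟨i, hi⟩ ∉ P i := by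
    intro i hi hmem
    have hd : L.get ⟨i, hi⟩ ∈ L.drop i := by
      rw [List.get_eq_getElem, List.drop_eq_getElem_cons hi]
      exact List.mem_cons_self
    have hnd := hnodup
    rw [← List.take_append_drop i L, List.nodup_append] at hnd
    exact hnd.2.2 _ (by simpa only [hP, List.mem_toFinset] using hmem) _ hd rfl
  have hIndP : ∀ i, Ind (P i) := by
    intro i
    induction i with
    | zero => simpa [hP] using hIempty
    | succ i ih =>
      by_cases hi : i < k
      · rw [hPsucc i hi]; exact (hstep ⟨i, hi⟩).1
      · have h1 : P (i + 1) = L.toFinset := hPtop _ (by omega)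
        have h2 : P i = L.toFinset := hPtop _ (by omega)
        rw [h1, ← h2]; exact ih
  have hIndS : Ind L.toFinset := by rw [← hPtop k le_rfl]; exact hIndP k
  -- the marginal gains of greedy
  set ρ : ℕ → ℝ := fun i => F (P (i + 1)) - F (P i) with hρ
  have hρ0 : ∀ i, 0 ≤ ρ i := by
    intro i
    have := hmono (P (i + 1)) (P i) (hPmono i (i + 1) (by omega))
    simp only [hρ]; linarith
  have hρstep : ∀ i, ρ (i + 1) ≤ ρ i := by
    intro i
    by_cases hi : i + 1 < k
    · have hik : i < k := by omega
      have hle : P i ⊆ P (i + 1) := hPmono i (i + 1) (by omega)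
      have e1 : F (P (i + 2)) = F (insert (L.get ⟨i + 1, hi⟩) (P (i + 1))) := by
        rw [hPsucc (i + 1) hi]
      have e2 : F (P (i + 1)) = F (insert (L.get ⟨i, hik⟩) (P i)) := by
        rw [hPsucc i hik]
      have hsnm1 : L.get ⟨i + 1, hi⟩ ∉ P (i + 1) := hgetnm (i + 1) hi
      have hsnm0 : L.get ⟨i + 1, hi⟩ ∉ P i := fun h => hsnm1 (hle h)
      have h1 : F (insert (L.get ⟨i + 1, hi⟩) (P (i + 1))) - F (P (i + 1)) ≤
          F (insert (L.get ⟨i + 1, hi⟩) (P i)) - F (P i) :=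
        hsub (P (i + 1)) (P i) hle _ hsnm1
      have hInds : Ind (insert (L.get ⟨i + 1, hi⟩) (P i)) :=
        hIdown _ _ (hstep ⟨i + 1, hi⟩).1 (Finset.insert_subset_insert _ hle)
      have h2 : F (insert (L.get ⟨i + 1, hi⟩) (P i)) ≤ F (insert (L.get ⟨i, hik⟩) (P i)) :=
        (hstep ⟨i, hik⟩).2 _ hsnm0 hInds
      show F (P (i + 2)) - F (P (i + 1)) ≤ F (P (i + 1)) - F (P i)
      rw [e1, e2]
      linarith
    · have h1 : P (i + 2) = L.toFinset := hPtop _ (by omega)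
      have h2 : P (i + 1) = L.toFinset := hPtop _ (by omega)
      have h3 : (0:ℝ) ≤ F (P (i + 1)) - F (P i) := hρ0 i
      rw [h2] at h3
      show F (P (i + 2)) - F (P (i + 1)) ≤ F (P (i + 1)) - F (P i)
      rw [h1, h2]
      linarith
  have hρanti' : ∀ j i : ℕ, i ≤ j → ρ j ≤ ρ i := by
    intro j
    induction j with
    | zero => intro i hij; rw [Nat.le_zero.mp hij]
    | succ j ihj =>
      intro i hij
      rcases Nat.lt_or_ge i (j + 1) with h | h
      · exact le_trans (hρstep j) (ihj i (by omega))
      · have : i = j + 1 := by omega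
        rw [this]
  have hρanti : ∀ i j : ℕ, i ≤ j → ρ j ≤ ρ i := fun i j h => hρanti' j i h
  -- the first-failure time
  set T : Finset α := A \ L.toFinset with hT
  have hex : ∀ a ∈ T, ∃ i, ¬ Ind (insert a (P (i + 1))) := by
    intro a ha
    refine ⟨k, ?_⟩
    rw [hPtop (k + 1) (by omega)]
    exact hstop a (by rw [hT, Finset.mem_sdiff] at ha; exact ha.2)
  set t : α → ℕ := fun a =>
    if h : ∃ i, ¬ Ind (insert a (P (i + 1))) then Nat.find h else 0 with ht
  have htspec : ∀ a ∈ T, ¬ Ind (insert a (P (t a + 1))) := by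
    intro a ha
    have h := hex a ha
    simp only [ht, dif_pos h]
    exact Nat.find_spec h
  have htmin : ∀ a ∈ T, Ind (insert a (P (t a))) := by
    intro a ha
    have h := hex a ha
    simp only [ht, dif_pos h]
    rcases Nat.eq_zero_or_pos (Nat.find h) with h0 | h0
    · rw [h0]
      have : insert a (P 0) = {a} := by simp [hP]
      rw [this]
      exact hIdown A {a} hA (Finset.singleton_subset_iff.mpr (by rw [hT, Finset.mem_sdiff] at ha; exact ha.1))
    · have := Nat.find_min h (m := Nat.find h - 1) (by omega)
      push_neg at this
      have e : Nat.find h - 1 + 1 = Nat.find h := by omega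
      rwa [e] at this
  have htlt : ∀ a ∈ T, t a < k := by
    intro a ha
    by_contra hge
    push_neg at hge
    have := htmin a ha
    rw [hPtop _ hge] at this
    exact hstop a (by rw [hT, Finset.mem_sdiff] at ha; exact ha.2) this
  -- counting: at most i elements fail by time i
  have hcount : ∀ i, (T.filter (fun a => t a < i)).card ≤ i := by
    intro i
    set D : Finset α := T.filter (fun a => ¬ Ind (insert a (P i))) with hD
    have hsubD : T.filter (fun a => t a < i) ⊆ D := by
      intro a ha
      rw [Finset.mem_filter] at ha ⊢
      refine ⟨ha.1, fun hInd => ?_⟩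
      exact htspec a ha.1 (hIdown _ _ hInd
        (Finset.insert_subset_insert _ (hPmono (t a + 1) i (by omega))))
    refine le_trans (Finset.card_le_card hsubD) ?_
    by_contra hgt
    push_neg at hgt
    have hlt : (P i).card < D.card := lt_of_le_of_lt (hPcard i) hgt
    have hIndD : Ind D := hIdown A D hA (by
      intro x hx
      rw [hD, Finset.mem_filter, hT, Finset.mem_sdiff] at hx
      exact hx.1.1)
    obtain ⟨e, he, hIe⟩ := hIexch (P i) D (hIndP i) hIndD hlt
    rw [Finset.mem_sdiff, hD, Finset.mem_filter] at he
    exact he.1.2 hIe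
  -- per-element bound
  have hbound : ∀ a ∈ T, F (insert a L.toFinset) - F L.toFinset ≤ ρ (t a) := by
    intro a ha
    have haS : a ∉ L.toFinset := by rw [hT, Finset.mem_sdiff] at ha; exact ha.2
    have hPsub : P (t a) ⊆ L.toFinset := by
      rw [← hPtop k le_rfl]; exact hPmono _ _ (le_of_lt (htlt a ha))
    have hanP : a ∉ P (t a) := fun h => haS (hPsub h)
    have h1 : F (insert a L.toFinset) - F L.toFinset ≤ F (insert a (P (t a))) - F (P (t a)) :=
      hsub L.toFinset (P (t a)) hPsub a haS
    have h2 := (hstep ⟨t a, htlt a ha⟩).2 a hanP (htmin a ha)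
    have e2 : P (t a + 1) = insert (L.get ⟨t a, htlt a ha⟩) (P (t a)) := hPsucc _ _
    simp only [hρ]
    rw [e2]
    linarith
  -- assemble
  have hTk : T.card ≤ k := by
    have := hcount k
    have hfull : T.filter (fun a => t a < k) = T :=
      Finset.filter_true_of_mem (fun a ha => htlt a ha)
    rwa [hfull] at this
  have step1 : F A ≤ F (L.toFinset ∪ T) := by
    apply hmono
    intro x hx
    by_cases h : x ∈ L.toFinset
    · exact Finset.mem_union_left _ h
    · exact Finset.mem_union_right _ (by rw [hT, Finset.mem_sdiff]; exact ⟨hx, h⟩)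
  have hdisj : Disjoint L.toFinset T := by
    rw [hT]; exact Finset.disjoint_sdiff
  have step2 := tel F hsub L.toFinset T hdisj
  have step3 : ∑ a ∈ T, (F (insert a L.toFinset) - F L.toFinset) ≤ ∑ a ∈ T, ρ (t a) :=
    Finset.sum_le_sum hbound
  have step4 := sum_rho_le ρ hρanti T t hcount
  have step5 : ∑ i ∈ Finset.range T.card, ρ i ≤ ∑ i ∈ Finset.range k, ρ i := by
    apply Finset.sum_le_sum_of_subset_of_nonneg
    · exact Finset.range_subset_range.mpr hTk
    · intro i _ _; exact hρ0 i
  have step6 : ∑ i ∈ Finset.range k, ρ i = F (P k) - F (P 0) :=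
    Finset.sum_range_sub (fun i => F (P i)) k
  have hP0 : F (P 0) = 0 := by simp [hP, hF0]
  have hPkS : P k = L.toFinset := hPtop k le_rfl
  rw [hPkS, hP0, sub_zero] at step6
  linarith
end
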